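/- Let H be a Tonelli Hamiltonian on ℝⁿ × ℝⁿ with associated Tonelli Lagrangian L, and let λ > 0. Suppose u : ℝⁿ → ℝ is continuous and λ-dominated by L, and γ : [a,b] → ℝⁿ is a C¹ (u,L)-λ-calibrated curve. If u is differentiable at γ(t₀) for some t₀ ∈ [a,b], then Du(γ(t₀)) = ∂L/∂v(γ(t₀), γ̇(t₀)) and λ u(γ(t₀)) + H(γ(t₀), Du(γ(t₀))) = 0. -/

import Mathlib

open Set Filter MeasureTheory Real Topology

noncomputable section

abbrev E (n : ℕ) : Type := EuclideanSpace ℝ (Fin n)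

noncomputable def Hp {n : ℕ} (H : E n × E n → ℝ) (x p : E n) : E n :=
  gradient (fun q => H (x, q)) p

noncomputable def Hx {n : ℕ} (H : E n × E n → ℝ) (x p : E n) : E n :=
  gradient (fun y => H (y, p)) x

noncomputable def Lv {n : ℕ} (L : E n × E n → ℝ) (x v : E n) : E n :=
  gradient (fun w => L (x, w)) v

noncomputable def Lx {n : ℕ} (L : E n × E n → ℝ) (x v : E n) : E n :=
  gradient (fun y => L (y, v)) x

/-- A Tonelli Hamiltonian. -/
def Tonelli {n : ℕ} (H : E n × E n → ℝ) : Prop :=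
  ContDiff ℝ 2 H ∧
  (∀ x p v : E n, v ≠ 0 → 0 < (inner ℝ (fderiv ℝ (fun q => Hp H x q) p v) v : ℝ)) ∧
  (∀ A : ℝ, ∃ B : ℝ, 0 ≤ B ∧ ∀ x p : E n, A * ‖p‖ - B ≤ H (x, p))

/-- `L` is the Lagrangian associated to `H` by fiberwise Legendre-Fenchel transform. -/
def IsLagrangianOf {n : ℕ} (L H : E n × E n → ℝ) : Prop :=
  ∀ x v : E n, IsLUB {r : ℝ | ∃ p : E n, r = (inner ℝ p v : ℝ) - H (x, p)} (L (x, v))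

/-- A continuous piecewise `C¹` curve on `[a,b]`, with derivative `γ'`. -/
def PiecewiseC1 {n : ℕ} (a b : ℝ) (γ γ' : ℝ → E n) : Prop :=
  ContinuousOn γ (Set.Icc a b) ∧
  ∃ s : Finset ℝ,
    (∀ t ∈ Set.Icc a b, t ∉ s → HasDerivAt γ (γ' t) t) ∧
    ContinuousOn γ' (Set.Icc a b \ s) ∧
    ∃ C : ℝ, ∀ t ∈ Set.Icc a b, ‖γ' t‖ ≤ C

/-- `u` is λ-dominated by `L`. -/
def Dominated {n : ℕ} (lam : ℝ) (L : E n × E n → ℝ) (u : E n → ℝ) : Prop :=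
  ∀ a b : ℝ, a < b → ∀ γ γ' : ℝ → E n, PiecewiseC1 a b γ γ' →
    Real.exp (lam * b) * u (γ b) - Real.exp (lam * a) * u (γ a) ≤
      ∫ t in a..b, Real.exp (lam * t) * L (γ t, γ' t)

/-- `γ` is `(u,L)`-λ-calibrated on `[a,b]`. -/
def Calibrated {n : ℕ} (lam : ℝ) (L : E n × E n → ℝ) (u : E n → ℝ)
    (a b : ℝ) (γ γ' : ℝ → E n) : Prop :=
  Real.exp (lam * b) * u (γ b) - Real.exp (lam * a) * u (γ a) =
    ∫ t in a..b, Real.exp (lam * t) * L (γ t, γ' t)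

def intVec {n : ℕ} (k : Fin n → ℤ) : E n :=
  (EuclideanSpace.equiv (Fin n) ℝ).symm (fun i => (k i : ℝ))

lemma inner_gradient_apply {n : ℕ} (f : E n → ℝ) (x w : E n) :
    (inner ℝ (gradient f x) w : ℝ) = fderiv ℝ f x w := by
  unfold gradient
  exact InnerProductSpace.toDual_symm_apply

/-- At a differentiability point of a λ-dominated function along a calibrated
`C¹` curve, `Du = ∂L/∂v` and the discounted Hamilton-Jacobi equation holds. -/
theorem stmt_7 {n : ℕ} (hn : 1 ≤ n) (lam : ℝ) (hlam : 0 < lam)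
    (H L : E n × E n → ℝ) (hH : Tonelli H) (hLH : IsLagrangianOf L H)
    (hLC2 : ContDiff ℝ 2 L)
    (u : E n → ℝ) (huc : Continuous u) (hdom : Dominated lam L u)
    (a b : ℝ) (hab : a < b) (γ γ' : ℝ → E n)
    (hγC1 : (∀ t ∈ Set.Icc a b, HasDerivAt γ (γ' t) t) ∧ ContinuousOn γ' (Set.Icc a b))
    (hcal : Calibrated lam L u a b γ γ')
    (t₀ : ℝ) (ht₀ : t₀ ∈ Set.Icc a b)
    (hdiff : DifferentiableAt ℝ u (γ t₀)) :
    gradient u (γ t₀) = Lv L (γ t₀) (γ' t₀) ∧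
    lam * u (γ t₀) + H (γ t₀, gradient u (γ t₀)) = 0 := by
  obtain ⟨hγd, hγ'c⟩ := hγC1
  set x₀ := γ t₀ with hx₀
  set v₀ := γ' t₀ with hv₀
  have hLcont : Continuous L := hLC2.continuous
  have hγcont : ContinuousOn γ (Set.Icc a b) :=
    fun t ht => (hγd t ht).continuousAt.continuousWithinAt
  set f : ℝ → ℝ := fun t => Real.exp (lam * t) * L (γ t, γ' t) with hf
  have hfc : ContinuousOn f (Set.Icc a b) := by
    apply ContinuousOn.mul
    · exact (Real.continuous_exp.comp (continuous_const.mul continuous_id)).continuousOn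
    · exact hLcont.comp_continuousOn (hγcont.prodMk hγ'c)
  obtain ⟨C, hC⟩ := isCompact_Icc.exists_bound_of_continuousOn hγ'c
  have hpc1 : ∀ s t, s ∈ Set.Icc a b → t ∈ Set.Icc a b → PiecewiseC1 s t γ γ' := by
    intro s t hs ht
    have hsub : Set.Icc s t ⊆ Set.Icc a b := Set.Icc_subset_Icc hs.1 ht.2
    exact ⟨hγcont.mono hsub, ∅, fun r hr _ => hγd r (hsub hr),
      hγ'c.mono (fun r hr => hsub hr.1), C, fun r hr => hC r (hsub hr)⟩
  have hfint : ∀ s t, s ∈ Set.Icc a b → t ∈ Set.Icc a b → IntervalIntegrable f volume s t := by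
    intro s t hs ht
    apply ContinuousOn.intervalIntegrable
    exact hfc.mono (Set.uIcc_subset_Icc hs ht)
  -- key identity: pointwise calibration
  have hkey : ∀ t ∈ Set.Icc a b,
      Real.exp (lam * t) * u (γ t) = Real.exp (lam * a) * u (γ a) + ∫ s in a..t, f s := by
    intro t ht
    have h1 : Real.exp (lam * t) * u (γ t) - Real.exp (lam * a) * u (γ a) ≤
        ∫ s in a..t, f s := by
      rcases eq_or_lt_of_le ht.1 with h | h
      · simp [← h]
      · exact hdom a t h γ γ' (hpc1 a t (Set.left_mem_Icc.2 hab.le) ht)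
    have h2 : Real.exp (lam * b) * u (γ b) - Real.exp (lam * t) * u (γ t) ≤
        ∫ s in t..b, f s := by
      rcases eq_or_lt_of_le ht.2 with h | h
      · simp [h]
      · exact hdom t b h γ γ' (hpc1 t b ht (Set.right_mem_Icc.2 hab.le))
    have hadd : (∫ s in a..t, f s) + ∫ s in t..b, f s = ∫ s in a..b, f s :=
      intervalIntegral.integral_add_adjacent_intervals
        (hfint a t (Set.left_mem_Icc.2 hab.le) ht) (hfint t b ht (Set.right_mem_Icc.2 hab.le))
    have hcal' : Real.exp (lam * b) * u (γ b) - Real.exp (lam * a) * u (γ a) =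
        ∫ s in a..b, f s := hcal
    linarith
  -- derivative of the calibration identity at t₀
  have hFTC : HasDerivWithinAt (fun t => Real.exp (lam * a) * u (γ a) + ∫ s in a..t, f s)
      (f t₀) (Set.Icc a b) t₀ := by
    haveI : Fact (t₀ ∈ Set.Icc a b) := ⟨ht₀⟩
    exact (intervalIntegral.integral_hasDerivWithinAt_right
      (hfint a t₀ (Set.left_mem_Icc.2 hab.le) ht₀)
      (hfc.stronglyMeasurableAtFilter_nhdsWithin measurableSet_Icc t₀)
      (hfc t₀ ht₀)).const_add _
  have hexp : HasDerivAt (fun t : ℝ => Real.exp (lam * t)) (Real.exp (lam * t₀) * lam) t₀ := by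
    have h : HasDerivAt (fun t : ℝ => lam * t) lam t₀ := by
      simpa using (hasDerivAt_id t₀).const_mul lam
    exact h.exp
  have huγ : HasDerivAt (fun t => u (γ t)) (fderiv ℝ u x₀ v₀) t₀ :=
    hdiff.hasFDerivAt.comp_hasDerivAt t₀ (hγd t₀ ht₀)
  have hF : HasDerivWithinAt (fun t => Real.exp (lam * t) * u (γ t))
      (Real.exp (lam * t₀) * lam * u x₀ + Real.exp (lam * t₀) * fderiv ℝ u x₀ v₀)
      (Set.Icc a b) t₀ := (hexp.mul huγ).hasDerivWithinAt
  have hF2 : HasDerivWithinAt (fun t => Real.exp (lam * t) * u (γ t)) (f t₀)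
      (Set.Icc a b) t₀ := hFTC.congr (fun y hy => hkey y hy) (hkey t₀ ht₀)
  have huniq : Real.exp (lam * t₀) * lam * u x₀ + Real.exp (lam * t₀) * fderiv ℝ u x₀ v₀
      = f t₀ := UniqueDiffWithinAt.eq_deriv _ ((uniqueDiffOn_Icc hab) t₀ ht₀) hF hF2
  have hEq : lam * u x₀ + fderiv ℝ u x₀ v₀ = L (x₀, v₀) := by
    apply mul_left_cancel₀ (Real.exp_ne_zero (lam * t₀))
    simp only [hf] at huniq
    linear_combination huniq
  -- domination along straight lines
  have hline : ∀ v : E n, lam * u x₀ + fderiv ℝ u x₀ v ≤ L (x₀, v) := by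
    intro v
    set σ : ℝ → E n := fun s => x₀ + (s - t₀) • v with hσ
    have hσt₀ : σ t₀ = x₀ := by simp [hσ]
    have hσd : ∀ s : ℝ, HasDerivAt σ v s := by
      intro s
      have h1 : HasDerivAt (fun s : ℝ => (s - t₀)) 1 s := (hasDerivAt_id s).sub_const t₀
      have h2 := (h1.smul_const v).const_add x₀
      rw [one_smul] at h2
      exact h2
    have hσc : Continuous σ :=
      continuous_const.add ((continuous_id.sub continuous_const).smul continuous_const)
    set g : ℝ → ℝ := fun s => Real.exp (lam * s) * L (σ s, v) with hg
    have hgc : Continuous g :=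
      ((Real.continuous_exp.comp (continuous_const.mul continuous_id)).mul
        (hLcont.comp (hσc.prodMk continuous_const)))
    have hJ : HasDerivAt (fun t => ∫ s in t₀..t, g s) (g t₀) t₀ :=
      intervalIntegral.integral_hasDerivAt_right (hgc.intervalIntegrable _ _)
        (hgc.stronglyMeasurableAtFilter _ _) hgc.continuousAt
    have huσ : HasDerivAt (fun s => u (σ s)) (fderiv ℝ u x₀ v) t₀ := by
      have h : HasFDerivAt u (fderiv ℝ u x₀) (σ t₀) := by rw [hσt₀]; exact hdiff.hasFDerivAt
      exact h.comp_hasDerivAt t₀ (hσd t₀)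
    set Df : ℝ → ℝ := fun t => (∫ s in t₀..t, g s) -
      (Real.exp (lam * t) * u (σ t) - Real.exp (lam * t₀) * u x₀) with hDf
    have hD0 : Df t₀ = 0 := by simp [hDf, hσt₀]
    have hDd : HasDerivAt Df (g t₀ -
        (Real.exp (lam * t₀) * lam * u x₀ + Real.exp (lam * t₀) * fderiv ℝ u x₀ v)) t₀ := by
      have hFσ : HasDerivAt (fun t => Real.exp (lam * t) * u (σ t))
          (Real.exp (lam * t₀) * lam * u x₀ + Real.exp (lam * t₀) * fderiv ℝ u x₀ v) t₀ := by
        have h := hexp.mul huσ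
        rw [hσt₀] at h
        exact h
      exact hJ.sub (hFσ.sub_const _)
    have hDnn : ∀ t, t ∈ Set.Ioi t₀ → 0 ≤ Df t := by
      intro t htt
      have hd : Real.exp (lam * t) * u (σ t) - Real.exp (lam * t₀) * u (σ t₀) ≤
          ∫ s in t₀..t, g s :=
        hdom t₀ t htt σ (fun _ => v) ⟨hσc.continuousOn, ∅, fun s _ _ => hσd s,
          continuousOn_const, ‖v‖, fun _ _ => le_refl _⟩
      rw [hσt₀] at hd
      simp only [hDf]
      linarith
    have hslope := hasDerivAt_iff_tendsto_slope.1 hDd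
    have h2 : Tendsto (slope Df t₀) (𝓝[>] t₀) (𝓝 (g t₀ -
        (Real.exp (lam * t₀) * lam * u x₀ + Real.exp (lam * t₀) * fderiv ℝ u x₀ v))) :=
      hslope.mono_left (nhdsWithin_mono _ (fun x hx => ne_of_gt hx))
    have hge : 0 ≤ g t₀ -
        (Real.exp (lam * t₀) * lam * u x₀ + Real.exp (lam * t₀) * fderiv ℝ u x₀ v) := by
      refine ge_of_tendsto h2 ?_
      filter_upwards [self_mem_nhdsWithin] with t ht
      rw [slope_def_field, hD0]
      have h3 : (0:ℝ) < t - t₀ := by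
        have := Set.mem_Ioi.1 ht; linarith
      exact div_nonneg (by simpa using hDnn t ht) h3.le
    have hgt₀ : g t₀ = Real.exp (lam * t₀) * L (x₀, v) := by
      simp only [hg, hσt₀]
    rw [hgt₀] at hge
    have hfinal : Real.exp (lam * t₀) * (lam * u x₀ + fderiv ℝ u x₀ v) ≤
        Real.exp (lam * t₀) * L (x₀, v) := by linarith [hge]
    exact le_of_mul_le_mul_left hfinal (Real.exp_pos _)
  -- the gradient of u equals ∂L/∂v
  have hLdiff : Differentiable ℝ (fun w : E n => L (x₀, w)) :=
    (hLC2.differentiable two_ne_zero).comp ((differentiable_const x₀).prodMk differentiable_id)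
  have hφmax : IsLocalMax (fun v => fderiv ℝ u x₀ v - L (x₀, v)) v₀ := by
    apply Filter.Eventually.of_forall
    intro v
    have h1 := hline v
    have h2 := hEq
    simp only []
    linarith
  have hfd0 : fderiv ℝ u x₀ - fderiv ℝ (fun w => L (x₀, w)) v₀ = 0 :=
    hφmax.hasFDerivAt_eq_zero ((fderiv ℝ u x₀).hasFDerivAt.sub (hLdiff v₀).hasFDerivAt)
  have hpq : fderiv ℝ u x₀ = fderiv ℝ (fun w => L (x₀, w)) v₀ := sub_eq_zero.1 hfd0
  have hgrad : ∀ w, (inner ℝ (gradient u x₀) w : ℝ) = fderiv ℝ u x₀ w :=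
    fun w => inner_gradient_apply u x₀ w
  have hLvi : ∀ w, (inner ℝ (Lv L x₀ v₀) w : ℝ) = fderiv ℝ (fun w => L (x₀, w)) v₀ w :=
    fun w => inner_gradient_apply _ v₀ w
  have goal1 : gradient u x₀ = Lv L x₀ v₀ := by
    apply ext_inner_left ℝ
    intro w
    rw [real_inner_comm (gradient u x₀) w, real_inner_comm (Lv L x₀ v₀) w, hgrad, hLvi, hpq]
  -- the Hamilton-Jacobi equation
  obtain ⟨B, hB0, hB⟩ := hH.2.2 (‖v₀‖ + 1)
  set f₀ : E n → ℝ := fun q => (inner ℝ q v₀ : ℝ) - H (x₀, q) with hf₀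
  have hf₀c : Continuous f₀ :=
    (continuous_id.inner continuous_const).sub (hH.1.continuous.comp (Continuous.prodMk_right x₀))
  set R : ℝ := max (B - f₀ 0) 0 with hR
  have hout : ∀ q : E n, R ≤ ‖q‖ → f₀ q ≤ f₀ 0 := by
    intro q hq
    have h1 : (inner ℝ q v₀ : ℝ) ≤ ‖q‖ * ‖v₀‖ := real_inner_le_norm q v₀
    have h2 := hB x₀ q
    have h3 : B - f₀ 0 ≤ ‖q‖ := le_trans (le_max_left _ _) hq
    simp only [hf₀] at h3 ⊢
    linarith
  have h0mem : (0 : E n) ∈ Metric.closedBall (0 : E n) R :=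
    Metric.mem_closedBall_self (le_max_right _ _)
  obtain ⟨ps, hpsmem, hpsmax⟩ := (isCompact_closedBall (0 : E n) R).exists_isMaxOn
    ⟨0, h0mem⟩ hf₀c.continuousOn
  have hub : ∀ q : E n, f₀ q ≤ f₀ ps := by
    intro q
    by_cases hq : ‖q‖ ≤ R
    · exact hpsmax (by simpa [Metric.mem_closedBall, dist_zero_right] using hq)
    · exact le_trans (hout q (not_le.1 hq).le) (hpsmax h0mem)
  have hL₀ : L (x₀, v₀) = f₀ ps := by
    refine le_antisymm ((hLH x₀ v₀).2 ?_) ((hLH x₀ v₀).1 ⟨ps, rfl⟩)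
    rintro r ⟨q, rfl⟩
    exact hub q
  have hmin : ∀ v : E n, L (x₀, v₀) - (inner ℝ ps v₀ : ℝ) ≤ L (x₀, v) - (inner ℝ ps v : ℝ) := by
    intro v
    have h1 : (inner ℝ ps v : ℝ) - H (x₀, ps) ≤ L (x₀, v) := (hLH x₀ v).1 ⟨ps, rfl⟩
    have h2 : L (x₀, v₀) - (inner ℝ ps v₀ : ℝ) = - H (x₀, ps) := by
      rw [hL₀]; simp only [hf₀]; ring
    linarith
  have hχ : IsLocalMin (fun v : E n => L (x₀, v) - (inner ℝ ps v : ℝ)) v₀ :=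
    Filter.Eventually.of_forall hmin
  have hχ0 : fderiv ℝ (fun w => L (x₀, w)) v₀ - innerSL ℝ ps = 0 :=
    hχ.hasFDerivAt_eq_zero ((hLdiff v₀).hasFDerivAt.sub (innerSL ℝ ps).hasFDerivAt)
  have hχeq : fderiv ℝ (fun w => L (x₀, w)) v₀ = innerSL ℝ ps := sub_eq_zero.1 hχ0
  have hps_eq : ps = gradient u x₀ := by
    apply ext_inner_left ℝ
    intro w
    rw [real_inner_comm ps w, real_inner_comm (gradient u x₀) w, hgrad w, hpq, hχeq]
    rfl
  have h3 : (inner ℝ ps v₀ : ℝ) = fderiv ℝ u x₀ v₀ := by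
    rw [hps_eq, hgrad]
  have h2 : L (x₀, v₀) = (inner ℝ ps v₀ : ℝ) - H (x₀, ps) := by
    rw [hL₀]
  refine ⟨goal1, ?_⟩
  rw [← hps_eq]
  linarith [hEq, h2, h3]

end
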